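/- arXiv:2507.01709 — 3 statements merged into one kernel-verified Lean document; each statement's English description precedes it below -/
import Mathlib

section
/- Let A, B be positive definite d×d matrices, ε > 0, and M an invertible d×d matrix. Then the matrix W = A^{1/2}(A^{1/2} M B Mᵀ A^{1/2} + (ε²/4) I_d)^{1/2} A^{-1/2} − (ε/2) I_d satisfies the quadratic matrix equation W² + εW − A M B Mᵀ = 0. -/
open Matrix

open Classical in
/-- The positive semidefinite square root (zero if not positive semidefinite). -/
noncomputable def psqrt {d : ℕ} (X : Matrix (Fin d) (Fin d) ℝ) : Matrix (Fin d) (Fin d) ℝ :=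
  if h : X.PosSemidef then (h.1.eigenvectorUnitary : Matrix (Fin d) (Fin d) ℝ) *
    diagonal ((↑) ∘ (√·) ∘ h.1.eigenvalues) * (star h.1.eigenvectorUnitary : Matrix (Fin d) (Fin d) ℝ)
  else 0

lemma psqrt_spec {d : ℕ} {X : Matrix (Fin d) (Fin d) ℝ} (h : X.PosSemidef) :
    (psqrt X).PosSemidef ∧ psqrt X * psqrt X = X := by
  classical
  have hdef : psqrt X = (h.1.eigenvectorUnitary : Matrix (Fin d) (Fin d) ℝ) *
      diagonal ((↑) ∘ (√·) ∘ h.1.eigenvalues) *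
      (star h.1.eigenvectorUnitary : Matrix (Fin d) (Fin d) ℝ) := by
    simp only [psqrt, dif_pos h]
  rw [hdef]
  set U : Matrix (Fin d) (Fin d) ℝ := (h.1.eigenvectorUnitary : Matrix (Fin d) (Fin d) ℝ)
  refine ⟨?_, ?_⟩
  · have hD : (diagonal ((↑) ∘ (√·) ∘ h.1.eigenvalues) : Matrix (Fin d) (Fin d) ℝ).PosSemidef := by
      rw [posSemidef_diagonal_iff]
      intro i
      simp [Real.sqrt_nonneg]
    have := hD.mul_mul_conjTranspose_same U
    rwa [← star_eq_conjTranspose] at this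
  · have hUU : (star h.1.eigenvectorUnitary : Matrix (Fin d) (Fin d) ℝ) * U = 1 :=
      Unitary.coe_star_mul_self _
    have hsp := h.1.spectral_theorem
    rw [Unitary.conjStarAlgAut_apply] at hsp
    conv_rhs => rw [hsp]
    calc U * diagonal ((↑) ∘ (√·) ∘ h.1.eigenvalues) * (star h.1.eigenvectorUnitary : Matrix (Fin d) (Fin d) ℝ) *
          (U * diagonal ((↑) ∘ (√·) ∘ h.1.eigenvalues) * (star h.1.eigenvectorUnitary : Matrix (Fin d) (Fin d) ℝ))
        = U * (diagonal ((↑) ∘ (√·) ∘ h.1.eigenvalues) *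
          ((star h.1.eigenvectorUnitary : Matrix (Fin d) (Fin d) ℝ) * U) *
          diagonal ((↑) ∘ (√·) ∘ h.1.eigenvalues)) *
          (star h.1.eigenvectorUnitary : Matrix (Fin d) (Fin d) ℝ) := by
          simp only [Matrix.mul_assoc]
      _ = _ := by
          rw [hUU, Matrix.mul_one, diagonal_mul_diagonal]
          congr 3
          funext i
          simp [Real.mul_self_sqrt (h.eigenvalues_nonneg i)]

theorem stmt8 {d : ℕ} (A B M : Matrix (Fin d) (Fin d) ℝ) (hA : A.PosDef) (hB : B.PosDef)
    (hM : IsUnit M.det) (ε : ℝ) (hε : 0 < ε)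
    (W : Matrix (Fin d) (Fin d) ℝ)
    (hW : W = psqrt A * psqrt (psqrt A * (M * B * Mᵀ) * psqrt A + (ε ^ 2 / 4) • 1) *
          (psqrt A)⁻¹ - (ε / 2) • 1) :
    W * W + ε • W - A * (M * B * Mᵀ) = 0 := by
  classical
  set X := M * B * Mᵀ with hX
  have hApsd := hA.posSemidef
  set S := psqrt A with hS
  have hSdef := psqrt_spec hApsd
  have hSpsd : S.PosSemidef := hSdef.1
  have hSS : S * S = A := hSdef.2
  have hSunit : IsUnit S.det := by
    have : S.det * S.det = A.det := by rw [← det_mul, hSS]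
    have hAdet : A.det ≠ 0 := ne_of_gt hA.det_pos
    exact isUnit_iff_ne_zero.mpr (fun h => hAdet (by rw [← this, h, zero_mul]))
  have hSinv : S * S⁻¹ = 1 := mul_nonsing_inv S hSunit
  have hSinv' : S⁻¹ * S = 1 := nonsing_inv_mul S hSunit
  have hXpsd : X.PosSemidef := by
    have : X = M * B * Mᴴ := by rw [conjTranspose_eq_transpose_of_trivial]
    exact this ▸ hB.posSemidef.mul_mul_conjTranspose_same M
  have hInner : (S * X * S + (ε ^ 2 / 4) • (1 : Matrix (Fin d) (Fin d) ℝ)).PosSemidef := by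
    have h1 : (S * X * S).PosSemidef := by
      have := hXpsd.mul_mul_conjTranspose_same S
      have hSsym : Sᴴ = S := hSpsd.isHermitian
      rw [conjTranspose_eq_transpose_of_trivial] at hSsym
      rwa [conjTranspose_eq_transpose_of_trivial, hSsym] at this
    have h2 : ((ε ^ 2 / 4) • (1 : Matrix (Fin d) (Fin d) ℝ)).PosSemidef := by
      exact PosSemidef.one.smul (by positivity)
    exact h1.add h2
  set T := psqrt (S * X * S + (ε ^ 2 / 4) • 1) with hT
  have hTdef := psqrt_spec hInner
  have hTT : T * T = S * X * S + (ε ^ 2 / 4) • 1 := hTdef.2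
  have hE : (S * T * S⁻¹) * (S * T * S⁻¹) = A * X + (ε ^ 2 / 4) • 1 := by
    calc (S * T * S⁻¹) * (S * T * S⁻¹) = S * T * (S⁻¹ * S) * T * S⁻¹ := by
          simp only [Matrix.mul_assoc]
      _ = S * (T * T) * S⁻¹ := by rw [hSinv']; simp only [Matrix.mul_assoc, Matrix.mul_one,
          Matrix.one_mul]
      _ = S * (S * X * S + (ε ^ 2 / 4) • 1) * S⁻¹ := by rw [hTT]
      _ = (S * S) * X * (S * S⁻¹) + (ε ^ 2 / 4) • (S * S⁻¹) := by
          rw [Matrix.mul_add, Matrix.add_mul, Matrix.mul_smul, Matrix.smul_mul, Matrix.mul_one]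
          simp only [Matrix.mul_assoc]
      _ = A * X + (ε ^ 2 / 4) • 1 := by rw [hSS, hSinv, Matrix.mul_one]
  rw [hW]
  set E := S * T * S⁻¹
  have key : (E - (ε / 2) • 1) * (E - (ε / 2) • 1) + ε • (E - (ε / 2) • 1)
      = E * E - (ε ^ 2 / 4) • (1 : Matrix (Fin d) (Fin d) ℝ) := by
    rw [Matrix.sub_mul, Matrix.mul_sub, Matrix.mul_sub, smul_sub]
    simp only [Matrix.smul_mul, Matrix.mul_smul, Matrix.mul_one, Matrix.one_mul, smul_smul]
    module
  rw [key, hE]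
  abel
end

section
/- Let A, B be positive definite d×d matrices, M invertible, ε > 0, and C_ε = [((A M B Mᵀ + (ε²/4)I)^{1/2}) − (ε/2)I](Mᵀ)^{-1}, where the square root is A^{1/2}(A^{1/2} M B Mᵀ A^{1/2} + (ε²/4)I)^{1/2} A^{-1/2}. Then B − C_εᵀ A^{-1} C_ε = ε M^{-1} A^{-1}[(A M B Mᵀ + (ε²/4)I)^{1/2} − (ε/2)I](Mᵀ)^{-1}. -/
open Matrix

namespace Matrix.PosSemidef

noncomputable abbrev sqrt {d : ℕ} {X : Matrix (Fin d) (Fin d) ℝ} (h : X.PosSemidef) :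
    Matrix (Fin d) (Fin d) ℝ :=
  (h.1.eigenvectorUnitary : Matrix (Fin d) (Fin d) ℝ) *
    diagonal ((↑) ∘ (√·) ∘ h.1.eigenvalues) *
    (star h.1.eigenvectorUnitary : Matrix (Fin d) (Fin d) ℝ)

theorem sqrt_mul_self {d : ℕ} {X : Matrix (Fin d) (Fin d) ℝ} (h : X.PosSemidef) :
    h.sqrt * h.sqrt = X := by
  have hs := h.1.spectral_theorem
  rw [Unitary.conjStarAlgAut_apply] at hs
  have hU : (star h.1.eigenvectorUnitary : Matrix (Fin d) (Fin d) ℝ) *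
      (h.1.eigenvectorUnitary : Matrix (Fin d) (Fin d) ℝ) = 1 := Unitary.coe_star_mul_self _
  have hD : diagonal ((↑) ∘ (√·) ∘ h.1.eigenvalues) *
      diagonal ((↑) ∘ (√·) ∘ h.1.eigenvalues) =
      diagonal (RCLike.ofReal ∘ h.1.eigenvalues : Fin d → ℝ) := by
    rw [diagonal_mul_diagonal]
    congr 1
    funext i
    simp [Real.mul_self_sqrt (h.eigenvalues_nonneg i)]
  unfold sqrt
  conv_rhs => rw [hs]
  simp only [Matrix.mul_assoc]
  rw [← Matrix.mul_assoc (star _ : Matrix (Fin d) (Fin d) ℝ) _ _, hU, Matrix.one_mul,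
    ← Matrix.mul_assoc (diagonal _) (diagonal _), hD]

theorem posSemidef_sqrt {d : ℕ} {X : Matrix (Fin d) (Fin d) ℝ} (h : X.PosSemidef) :
    h.sqrt.PosSemidef := by
  have hD : (diagonal ((↑) ∘ (√·) ∘ h.1.eigenvalues) : Matrix (Fin d) (Fin d) ℝ).PosSemidef :=
    posSemidef_diagonal_iff.mpr fun i => by simp [Real.sqrt_nonneg]
  have := hD.mul_mul_conjTranspose_same (h.1.eigenvectorUnitary : Matrix (Fin d) (Fin d) ℝ)
  unfold sqrt
  rwa [star_eq_conjTranspose]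

end Matrix.PosSemidef

theorem stmt11 {d : ℕ} (A B M : Matrix (Fin d) (Fin d) ℝ) (hA : A.PosDef) (hB : B.PosDef)
    (hM : IsUnit M.det) (ε : ℝ) (hε : 0 < ε)
    (K C : Matrix (Fin d) (Fin d) ℝ)
    (hK : K = psqrt A * psqrt (psqrt A * (M * B * Mᵀ) * psqrt A + (ε ^ 2 / 4) • 1) *
          (psqrt A)⁻¹)
    (hC : C = (K - (ε / 2) • 1) * (Mᵀ)⁻¹) :
    B - Cᵀ * A⁻¹ * C = ε • (M⁻¹ * A⁻¹ * (K - (ε / 2) • 1) * (Mᵀ)⁻¹) := by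
  have hAps : A.PosSemidef := hA.posSemidef
  set S : Matrix (Fin d) (Fin d) ℝ := psqrt A with hS
  have hSdef : S = hAps.sqrt := by rw [hS, psqrt, dif_pos hAps]
  have hS2 : S * S = A := by rw [hSdef]; exact hAps.sqrt_mul_self
  have hSsym : Sᵀ = S := by
    have := hAps.posSemidef_sqrt.isHermitian
    rw [hSdef, ← conjTranspose_eq_transpose_of_trivial]; exact this
  have hSdet : IsUnit S.det := by
    have : (0:ℝ) < A.det := hA.det_pos
    rw [← hS2, det_mul] at this
    have hne : S.det ≠ 0 := by
      intro h; rw [h, mul_zero] at this; exact lt_irrefl 0 this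
    exact isUnit_iff_ne_zero.mpr hne
  set T : Matrix (Fin d) (Fin d) ℝ := S⁻¹ with hT
  have hST : S * T = 1 := mul_nonsing_inv S hSdet
  have hTS : T * S = 1 := nonsing_inv_mul S hSdet
  -- the inner matrix is positive semidefinite
  have hMBMt : (M * B * Mᵀ).PosSemidef := by
    have := hB.posSemidef.mul_mul_conjTranspose_same M
    simpa [conjTranspose_eq_transpose_of_trivial, Matrix.mul_assoc] using this
  have hXps : (S * (M * B * Mᵀ) * S + (ε ^ 2 / 4) • 1).PosSemidef := by
    have h1 : (S * (M * B * Mᵀ) * S).PosSemidef := by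
      have := hMBMt.mul_mul_conjTranspose_same S
      have hSH : Sᴴ = S := by
        rw [conjTranspose_eq_transpose_of_trivial, hSsym]
      rw [hSH] at this
      exact this
    have h2 : ((ε ^ 2 / 4 : ℝ) • (1 : Matrix (Fin d) (Fin d) ℝ)).PosSemidef := by
      rw [smul_one_eq_diagonal]
      exact posSemidef_diagonal_iff.mpr fun i => by positivity
    exact h1.add h2
  set R : Matrix (Fin d) (Fin d) ℝ := psqrt (S * (M * B * Mᵀ) * S + (ε ^ 2 / 4) • 1) with hR
  have hRdef : R = hXps.sqrt := by rw [hR, psqrt, dif_pos hXps]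
  have hR2 : R * R = S * (M * B * Mᵀ) * S + (ε ^ 2 / 4) • 1 := by
    rw [hRdef]; exact hXps.sqrt_mul_self
  have hRsym : Rᵀ = R := by
    have := hXps.posSemidef_sqrt.isHermitian
    rw [hRdef, ← conjTranspose_eq_transpose_of_trivial]; exact this
  have hTsym : Tᵀ = T := by rw [hT, transpose_nonsing_inv, hSsym]
  have hAinv : A⁻¹ = T * T := by rw [← hS2, Matrix.mul_inv_rev, hT]
  have hMMt : IsUnit (Mᵀ).det := by rwa [det_transpose]
  have hMM : M * M⁻¹ = 1 := mul_nonsing_inv M hM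
  have hMtN : (Mᵀ)⁻¹ * Mᵀ = 1 := nonsing_inv_mul Mᵀ hMMt
  -- helper cancellation lemmas
  have hST' : ∀ X : Matrix (Fin d) (Fin d) ℝ, S * (T * X) = X := fun X => by
    rw [← Matrix.mul_assoc, hST, Matrix.one_mul]
  have hTS' : ∀ X : Matrix (Fin d) (Fin d) ℝ, T * (S * X) = X := fun X => by
    rw [← Matrix.mul_assoc, hTS, Matrix.one_mul]
  have hMM' : ∀ X : Matrix (Fin d) (Fin d) ℝ, M⁻¹ * (M * X) = X := fun X => by
    rw [← Matrix.mul_assoc, nonsing_inv_mul M hM, Matrix.one_mul]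
  -- transpose computations
  have hCt : Cᵀ = M⁻¹ * ((T * (R * S)) - (ε / 2) • 1) := by
    rw [hC, transpose_mul, transpose_sub, transpose_smul, transpose_one,
      transpose_nonsing_inv, transpose_transpose, hK, transpose_mul, transpose_mul,
      hSsym, hRsym, hTsym]
  rw [hCt, hC, hK, hAinv]
  have hMtMt : Mᵀ * (Mᵀ)⁻¹ = 1 := mul_nonsing_inv Mᵀ hMMt
  have hMt' : ∀ X : Matrix (Fin d) (Fin d) ℝ, Mᵀ * ((Mᵀ)⁻¹ * X) = X := fun X => by
    rw [← Matrix.mul_assoc, hMtMt, Matrix.one_mul]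
  have hRR' : ∀ X : Matrix (Fin d) (Fin d) ℝ,
      R * (R * X) = S * (M * (B * (Mᵀ * (S * X)))) + (ε ^ 2 / 4) • X := fun X => by
    rw [← Matrix.mul_assoc, hR2, Matrix.add_mul, Matrix.smul_mul, Matrix.one_mul]
    simp only [Matrix.mul_assoc]
  simp only [Matrix.sub_mul, Matrix.mul_sub, smul_mul_assoc, Matrix.mul_smul,
    smul_sub, smul_smul, Matrix.mul_one, Matrix.one_mul, Matrix.mul_assoc,
    Matrix.mul_add, Matrix.add_mul, smul_add,
    hST', hTS', hMM', hMt', hRR', hST, hTS, hMM, hMtMt]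
  module
end

section
/- With A, B positive definite, M invertible, ε > 0, and C_ε defined as C_ε = [(A M B Mᵀ + (ε²/4)I)^{1/2} − (ε/2)I](Mᵀ)^{-1}, the determinant of the block matrix X_{C_ε} = [[A, C_ε],[C_εᵀ, B]] equals ε^d · det(M)^{-2} · det((A M B Mᵀ + (ε²/4)I)^{1/2} − (ε/2)I). -/
open Matrix

lemma psqrt_mul_self' {d : ℕ} {X : Matrix (Fin d) (Fin d) ℝ} (h : X.PosSemidef) :
    psqrt X * psqrt X = X := by
  classical
  rw [psqrt, dif_pos h]
  have hU : (star h.1.eigenvectorUnitary : Matrix (Fin d) (Fin d) ℝ) *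
      (h.1.eigenvectorUnitary : Matrix (Fin d) (Fin d) ℝ) = 1 := h.1.eigenvectorUnitary.2.1
  have hD : diagonal ((↑) ∘ (√·) ∘ h.1.eigenvalues) * diagonal ((↑) ∘ (√·) ∘ h.1.eigenvalues)
      = diagonal (RCLike.ofReal ∘ h.1.eigenvalues : Fin d → ℝ) := by
    rw [diagonal_mul_diagonal]
    congr 1
    funext i
    simp [Real.mul_self_sqrt (h.eigenvalues_nonneg i)]
  conv_rhs => rw [h.1.spectral_theorem]
  rw [Unitary.conjStarAlgAut_apply]
  calc _ = (h.1.eigenvectorUnitary : Matrix (Fin d) (Fin d) ℝ) *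
        (diagonal ((↑) ∘ (√·) ∘ h.1.eigenvalues) *
          ((star h.1.eigenvectorUnitary : Matrix (Fin d) (Fin d) ℝ) *
            (h.1.eigenvectorUnitary : Matrix (Fin d) (Fin d) ℝ)) *
          diagonal ((↑) ∘ (√·) ∘ h.1.eigenvalues)) *
        (star h.1.eigenvectorUnitary : Matrix (Fin d) (Fin d) ℝ) := by
        simp only [Matrix.mul_assoc]
    _ = _ := by rw [hU, Matrix.mul_one, hD]

lemma psqrt_isHermitian' {d : ℕ} {X : Matrix (Fin d) (Fin d) ℝ} (h : X.PosSemidef) :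
    (psqrt X).IsHermitian := by
  classical
  rw [psqrt, dif_pos h]
  unfold IsHermitian
  simp [conjTranspose_mul, Matrix.mul_assoc, star_eq_conjTranspose]

theorem stmt12 {d : ℕ} (A B M : Matrix (Fin d) (Fin d) ℝ) (hA : A.PosDef) (hB : B.PosDef)
    (hM : IsUnit M.det) (ε : ℝ) (hε : 0 < ε)
    (K C : Matrix (Fin d) (Fin d) ℝ)
    (hK : K = psqrt A * psqrt (psqrt A * (M * B * Mᵀ) * psqrt A + (ε ^ 2 / 4) • 1) *
          (psqrt A)⁻¹)
    (hC : C = (K - (ε / 2) • 1) * (Mᵀ)⁻¹) :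
    (Matrix.fromBlocks A C Cᵀ B).det = ε ^ d * (M.det ^ 2)⁻¹ * (K - (ε / 2) • 1).det := by
  classical
  have hA' : A.PosSemidef := hA.posSemidef
  set sA := psqrt A with hsA_def
  have hsA : sA = psqrt A := rfl
  have hsAmul : sA * sA = A := by rw [hsA]; exact psqrt_mul_self' hA'
  have hsAT : sAᵀ = sA := by
    rw [hsA, ← conjTranspose_eq_transpose_of_trivial]
    exact psqrt_isHermitian' hA'
  have hdetA : A.det ≠ 0 := hA.det_pos.ne'
  have hdetsA : sA.det ≠ 0 := by
    intro h
    rw [← hsAmul, det_mul, h, mul_zero] at hdetA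
    exact hdetA rfl
  have husA : IsUnit sA.det := (Ne.isUnit hdetsA)
  have husA' : sA * sA⁻¹ = 1 := mul_nonsing_inv sA husA
  have husA'' : sA⁻¹ * sA = 1 := nonsing_inv_mul sA husA
  -- positive definiteness of the inner matrix
  set P := sA * (M * B * Mᵀ) * sA + (ε ^ 2 / 4) • 1 with hP_def
  have hX : (M * B * Mᵀ).PosSemidef := by
    have := hB.posSemidef.mul_mul_conjTranspose_same M
    rwa [conjTranspose_eq_transpose_of_trivial] at this
  have hPs : (sA * (M * B * Mᵀ) * sA).PosSemidef := by
    have := hX.mul_mul_conjTranspose_same sA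
    rwa [conjTranspose_eq_transpose_of_trivial, hsAT] at this
  have hsmul : ((ε ^ 2 / 4) • (1 : Matrix (Fin d) (Fin d) ℝ)).PosDef := by
    rw [smul_one_eq_diagonal]
    exact posDef_diagonal_iff.mpr fun i => by positivity
  have hP : P.PosDef := Matrix.PosDef.posSemidef_add hPs hsmul
  set S := psqrt P with hS_def
  have hS : S = psqrt P := rfl
  have hSmul : S * S = P := by rw [hS]; exact psqrt_mul_self' hP.posSemidef
  have hST : Sᵀ = S := by
    rw [hS, ← conjTranspose_eq_transpose_of_trivial]
    exact psqrt_isHermitian' hP.posSemidef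
  -- K squared
  have hK2 : K * K = A * (M * B * Mᵀ) + (ε ^ 2 / 4) • 1 := by
    rw [hK]
    calc sA * S * sA⁻¹ * (sA * S * sA⁻¹) = sA * (S * ((sA⁻¹ * sA) * S)) * sA⁻¹ := by
          noncomm_ring
      _ = sA * P * sA⁻¹ := by rw [husA'', one_mul, hSmul]
      _ = (sA * sA) * (M * B * Mᵀ) * (sA * sA⁻¹) + (ε ^ 2 / 4) • (sA * sA⁻¹) := by
          rw [hP_def]; noncomm_ring [Matrix.mul_smul, Matrix.smul_mul]
      _ = A * (M * B * Mᵀ) + (ε ^ 2 / 4) • 1 := by rw [hsAmul, husA', Matrix.mul_one]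
  -- symmetry fact
  have hAinv : A⁻¹ = sA⁻¹ * sA⁻¹ := by rw [← hsAmul, Matrix.mul_inv_rev]
  have hKT : Kᵀ * A⁻¹ = A⁻¹ * K := by
    rw [hK, hAinv, Matrix.transpose_mul, Matrix.transpose_mul, hST,
      Matrix.transpose_nonsing_inv, hsAT]
    calc sA⁻¹ * (S * sA) * (sA⁻¹ * sA⁻¹)
        = sA⁻¹ * S * (sA * sA⁻¹) * sA⁻¹ := by noncomm_ring
      _ = sA⁻¹ * S * sA⁻¹ := by rw [husA', Matrix.mul_one]
      _ = sA⁻¹ * (sA⁻¹ * sA) * S * sA⁻¹ := by rw [husA'', Matrix.mul_one]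
      _ = sA⁻¹ * sA⁻¹ * (sA * S * sA⁻¹) := by noncomm_ring
  have hAiA : A⁻¹ * A = 1 := nonsing_inv_mul A (Ne.isUnit hdetA)
  have hKTK : Kᵀ * A⁻¹ * K = M * B * Mᵀ + (ε ^ 2 / 4) • A⁻¹ := by
    rw [hKT, Matrix.mul_assoc, hK2, Matrix.mul_add, ← Matrix.mul_assoc, hAiA, one_mul,
      Matrix.mul_smul, Matrix.mul_one]
  -- invertibility of M, Mᵀ
  have hdM : M.det ≠ 0 := hM.ne_zero
  have hMT : IsUnit (Mᵀ).det := by rwa [det_transpose]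
  have hMiM : M⁻¹ * M = 1 := nonsing_inv_mul M hM
  have hMTinv : Mᵀ * (Mᵀ)⁻¹ = 1 := mul_nonsing_inv _ hMT
  -- the Schur complement
  have hCT : Cᵀ = M⁻¹ * (Kᵀ - (ε / 2) • 1) := by
    rw [hC, Matrix.transpose_mul, Matrix.transpose_nonsing_inv, Matrix.transpose_transpose,
      Matrix.transpose_sub, Matrix.transpose_smul, Matrix.transpose_one]
  have key : B - Cᵀ * A⁻¹ * C = ε • (M⁻¹ * (A⁻¹ * (K - (ε / 2) • 1)) * (Mᵀ)⁻¹) := by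
    have hE : (Kᵀ - (ε / 2) • 1) * A⁻¹ * (K - (ε / 2) • 1)
        = M * B * Mᵀ + (ε ^ 2 / 2) • A⁻¹ - ε • (A⁻¹ * K) := by
      have expand : (Kᵀ - (ε / 2) • 1) * A⁻¹ * (K - (ε / 2) • 1)
          = Kᵀ * A⁻¹ * K - (ε / 2) • (Kᵀ * A⁻¹) - (ε / 2) • (A⁻¹ * K)
            + (ε ^ 2 / 4) • A⁻¹ := by
        simp only [Matrix.sub_mul, Matrix.mul_sub, Matrix.smul_mul, Matrix.mul_smul,
          Matrix.one_mul, Matrix.mul_one, smul_smul]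
        module
      rw [expand, hKTK, hKT]
      module
    rw [hCT, hC]
    calc B - M⁻¹ * (Kᵀ - (ε / 2) • 1) * A⁻¹ * ((K - (ε / 2) • 1) * (Mᵀ)⁻¹)
        = B - M⁻¹ * ((Kᵀ - (ε / 2) • 1) * A⁻¹ * (K - (ε / 2) • 1)) * (Mᵀ)⁻¹ := by
          noncomm_ring
      _ = B - M⁻¹ * (M * B * Mᵀ + (ε ^ 2 / 2) • A⁻¹ - ε • (A⁻¹ * K)) * (Mᵀ)⁻¹ := by rw [hE]
      _ = B - (M⁻¹ * M) * B * (Mᵀ * (Mᵀ)⁻¹)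
            - (ε ^ 2 / 2) • (M⁻¹ * A⁻¹ * (Mᵀ)⁻¹) + ε • (M⁻¹ * (A⁻¹ * K) * (Mᵀ)⁻¹) := by
          simp only [Matrix.mul_add, Matrix.add_mul, Matrix.mul_sub, Matrix.sub_mul,
            Matrix.mul_smul, Matrix.smul_mul, Matrix.mul_assoc]
          module
      _ = ε • (M⁻¹ * (A⁻¹ * (K - (ε / 2) • 1)) * (Mᵀ)⁻¹) := by
          rw [hMiM, hMTinv, Matrix.one_mul, Matrix.mul_one]
          simp only [Matrix.mul_sub, Matrix.sub_mul, Matrix.mul_smul, Matrix.smul_mul,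
            Matrix.mul_one, smul_smul, Matrix.mul_assoc]
          module
  -- determinant computation
  have : Invertible A := Matrix.invertibleOfIsUnitDet A (Ne.isUnit hdetA)
  rw [det_fromBlocks₁₁, invOf_eq_nonsing_inv, key, det_smul, det_mul, det_mul,
    Matrix.det_nonsing_inv, Matrix.det_nonsing_inv, det_transpose, Matrix.det_mul,
    Matrix.det_nonsing_inv]
  rw [Ring.inverse_eq_inv', Fintype.card_fin]
  have hd : (K - (ε / 2) • 1).det = (K - (ε / 2) • 1).det := rfl
  field_simp
end
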